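/- The complex reflection group W_{m,n} of type G(m,1,n), presented by generators s_0, s_1,…,s_{n−1} with relations s_0^m = 1, s_i² = 1 (1 ≤ i ≤ n−1), s_0s_1s_0s_1 = s_1s_0s_1s_0, s_is_j = s_js_i for |i−j|>1, and s_is_{i+1}s_i = s_{i+1}s_is_{i+1}, is isomorphic to the wreath product (ℤ/mℤ)^n ⋊ S_n, where S_n acts by permuting the n copies of ℤ/mℤ. -/

import Mathlib

namespace SSW

/-- The defining relators of the complex reflection group `W_{m,n}` of type
`G(m,1,n)`, on generators `s_0, s_1, …, s_{n−1}`: `s_0^m = 1`, `s_i² = 1` for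
`1 ≤ i ≤ n−1`, `s_0s_1s_0s_1 = s_1s_0s_1s_0`, `s_is_j = s_js_i` for `|i−j| > 1`,
and the braid relations `s_is_{i+1}s_i = s_{i+1}s_is_{i+1}` for `1 ≤ i`. -/
def Wrels (m n : ℕ) : Set (FreeGroup (Fin n)) :=
  {w | (∃ h : 0 < n, w = FreeGroup.of (⟨0, h⟩ : Fin n) ^ m) ∨
    (∃ i : Fin n, 0 < (i : ℕ) ∧ w = FreeGroup.of i ^ 2) ∨
    (∃ h : 1 < n,
      w = FreeGroup.of (⟨0, by omega⟩ : Fin n) * FreeGroup.of (⟨1, h⟩ : Fin n) *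
          FreeGroup.of (⟨0, by omega⟩ : Fin n) * FreeGroup.of (⟨1, h⟩ : Fin n) *
          (FreeGroup.of (⟨1, h⟩ : Fin n) * FreeGroup.of (⟨0, by omega⟩ : Fin n) *
            FreeGroup.of (⟨1, h⟩ : Fin n) * FreeGroup.of (⟨0, by omega⟩ : Fin n))⁻¹) ∨
    (∃ i j : Fin n, (i : ℕ) + 1 < (j : ℕ) ∧
      w = FreeGroup.of i * FreeGroup.of j * (FreeGroup.of j * FreeGroup.of i)⁻¹) ∨
    (∃ i j : Fin n, 0 < (i : ℕ) ∧ (j : ℕ) = (i : ℕ) + 1 ∧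
      w = FreeGroup.of i * FreeGroup.of j * FreeGroup.of i *
          (FreeGroup.of j * FreeGroup.of i * FreeGroup.of j)⁻¹)}

/-- The action of `S_n` on `(ℤ/mℤ)^n` by permuting the `n` coordinates. -/
def permAct (m n : ℕ) : Equiv.Perm (Fin n) →* MulAut (Fin n → Multiplicative (ZMod m)) where
  toFun σ :=
    { toEquiv := Equiv.arrowCongr σ (Equiv.refl (Multiplicative (ZMod m)))
      map_mul' := fun f g => rfl }
  map_one' := by ext f x; rfl
  map_mul' := fun σ τ => by ext f x; rfl

section
variable (m n : ℕ)

abbrev P := PresentedGroup (Wrels m n)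

def a (i : Fin n) : P m n := PresentedGroup.of i

variable {m n}

lemma relations_hold {r : FreeGroup (Fin n)} (h : r ∈ Wrels m n) :
    PresentedGroup.mk (Wrels m n) r = 1 :=
  (QuotientGroup.eq_one_iff r).2 (Subgroup.subset_normalClosure h)

lemma mk_of (i : Fin n) : PresentedGroup.mk (Wrels m n) (FreeGroup.of i) = a m n i := rfl

lemma rel_pow (h : 0 < n) : a m n ⟨0, h⟩ ^ m = 1 := by
  have := relations_hold (m := m) (Or.inl ⟨h, rfl⟩)
  rwa [map_pow, mk_of] at this

lemma rel_sq (i : Fin n) (hi : 0 < (i : ℕ)) : a m n i * a m n i = 1 := by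
  have := relations_hold (m := m) (Or.inr (Or.inl ⟨i, hi, rfl⟩))
  rwa [map_pow, mk_of, pow_two] at this

lemma a_inv (i : Fin n) (hi : 0 < (i : ℕ)) : (a m n i)⁻¹ = a m n i :=
  inv_eq_of_mul_eq_one_right (rel_sq i hi)

lemma rel_zero_one (h : 1 < n) :
    a m n ⟨0, by omega⟩ * a m n ⟨1, h⟩ * a m n ⟨0, by omega⟩ * a m n ⟨1, h⟩ =
      a m n ⟨1, h⟩ * a m n ⟨0, by omega⟩ * a m n ⟨1, h⟩ * a m n ⟨0, by omega⟩ := by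
  have := relations_hold (m := m) (Or.inr (Or.inr (Or.inl ⟨h, rfl⟩)))
  simp only [map_mul, map_inv, mk_of, mul_inv_eq_one] at this
  exact this

lemma rel_comm {i j : Fin n} (hij : (i : ℕ) + 1 < (j : ℕ)) :
    a m n i * a m n j = a m n j * a m n i := by
  have := relations_hold (m := m) (Or.inr (Or.inr (Or.inr (Or.inl ⟨i, j, hij, rfl⟩))))
  simp only [map_mul, map_inv, mk_of, mul_inv_eq_one] at this
  exact this

lemma rel_braid {i j : Fin n} (hi : 0 < (i : ℕ)) (hij : (j : ℕ) = (i : ℕ) + 1) :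
    a m n i * a m n j * a m n i = a m n j * a m n i * a m n j := by
  have := relations_hold (m := m)
    (Or.inr (Or.inr (Or.inr (Or.inr ⟨i, j, hi, hij, rfl⟩))))
  simp only [map_mul, map_inv, mk_of, mul_inv_eq_one] at this
  exact this


variable (m n)

/-- `t j` (for `j < n`): the reflections `t_0 = s_0`, `t_j = s_j t_{j-1} s_j`. -/
def t : ℕ → P m n
  | 0 => if h : 0 < n then a m n ⟨0, h⟩ else 1
  | (j+1) => if h : j + 1 < n then a m n ⟨j+1, h⟩ * t j * a m n ⟨j+1, h⟩ else 1

variable {m n}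

lemma t_zero (h : 0 < n) : t m n 0 = a m n ⟨0, h⟩ := by simp [t, h]

lemma t_succ {j : ℕ} (h : j + 1 < n) :
    t m n (j+1) = a m n ⟨j+1, h⟩ * t m n j * a m n ⟨j+1, h⟩ := by simp [t, h]

/-- `a k` commutes with `t j` when `j + 1 < k`. -/
lemma a_comm_t_low {k : ℕ} (hk : k < n) {j : ℕ} (hj : j + 1 < k) :
    Commute (a m n ⟨k, hk⟩) (t m n j) := by
  induction j with
  | zero =>
      rw [t_zero (by omega)]
      exact (commute_iff_eq _ _).2
        (rel_comm (i := ⟨0, by omega⟩) (j := ⟨k, hk⟩) (by simpa using hj)).symm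
  | succ j ih =>
      rw [t_succ (by omega)]
      have h1 : Commute (a m n ⟨k, hk⟩) (a m n ⟨j+1, by omega⟩) :=
        ((commute_iff_eq _ _).2
          (rel_comm (i := ⟨j+1, by omega⟩) (j := ⟨k, hk⟩) (by simpa using hj))).symm
      exact (h1.mul_right (ih (by omega))).mul_right h1

/-- `a k` commutes with `t j` when `1 ≤ k < j`. -/
lemma a_comm_t_high {k : ℕ} (hk1 : 1 ≤ k) {j : ℕ} (hj : j < n) (hkj : k < j) :
    Commute (a m n ⟨k, by omega⟩) (t m n j) := by
  induction j with
  | zero => omega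
  | succ j ih =>
      rw [t_succ hj]
      rcases Nat.lt_or_ge k j with h | h
      · have h1 : Commute (a m n ⟨k, by omega⟩) (a m n ⟨j+1, by omega⟩) :=
          (commute_iff_eq _ _).2
            (rel_comm (i := ⟨k, by omega⟩) (j := ⟨j+1, by omega⟩) (by simpa using h))
        exact (h1.mul_right (ih (by omega) h)).mul_right h1
      · have hkj' : k = j := by omega
        subst hkj'
        obtain ⟨k', rfl⟩ : ∃ k', k = k' + 1 := ⟨k - 1, by omega⟩
        rw [t_succ (show k' + 1 < n by omega)]
        set A := a m n ⟨k'+1, by omega⟩ with hA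
        set B := a m n ⟨k'+1+1, by omega⟩ with hB
        set T := t m n k' with hT
        have hbraid : A * B * A = B * A * B := by
          refine rel_braid (by simp) (by simp)
        have hTB : Commute B T :=
          a_comm_t_low (k := k'+1+1) (by omega) (j := k') (by omega)
        have hAA : A * A = 1 := rel_sq _ (by simp)
        refine (commute_iff_eq _ _).2 ?_
        calc A * (B * (A * T * A) * B) = (A * B * A) * T * (A * B) := by
              group
          _ = (B * A * B) * T * (A * B) := by rw [hbraid]
          _ = B * A * (B * T) * (A * B) := by group
          _ = B * A * (T * B) * (A * B) := by rw [hTB.eq]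
          _ = B * (A * T) * (B * A * B) := by group
          _ = B * (A * T) * (A * B * A) := by rw [← hbraid]
          _ = (B * (A * T * A) * B) * A := by group


/-- Conjugation of `t j` by `a k` (`1 ≤ k < n`): swaps `t_{k-1}` and `t_k`, fixes others. -/
lemma a_conj_t {k : ℕ} (hk1 : 1 ≤ k) (hk : k < n) {j : ℕ} (hj : j < n) :
    a m n ⟨k, hk⟩ * t m n j * a m n ⟨k, hk⟩ =
      t m n (if j = k then k - 1 else if j = k - 1 then k else j) := by
  rcases eq_or_ne j k with rfl | h1
  · simp only [if_pos rfl]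
    obtain ⟨k', rfl⟩ : ∃ k', j = k' + 1 := ⟨j - 1, by omega⟩
    rw [t_succ hj]
    have hAA : a m n ⟨k'+1, hj⟩ * a m n ⟨k'+1, hj⟩ = 1 := rel_sq _ (by simp)
    calc a m n ⟨k'+1, hj⟩ * (a m n ⟨k'+1, hj⟩ * t m n k' * a m n ⟨k'+1, hj⟩) *
          a m n ⟨k'+1, hj⟩
        = (a m n ⟨k'+1, hj⟩ * a m n ⟨k'+1, hj⟩) * t m n k' *
          (a m n ⟨k'+1, hj⟩ * a m n ⟨k'+1, hj⟩) := by group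
      _ = t m n k' := by rw [hAA]; group
      _ = t m n (k' + 1 - 1) := by simp
  · rcases eq_or_ne j (k - 1) with h2 | h2
    · rw [if_neg h1, if_pos h2]
      obtain ⟨k', rfl⟩ : ∃ k', k = k' + 1 := ⟨k - 1, by omega⟩
      have hj' : j = k' := by omega
      subst hj'
      rw [t_succ hk]
    · simp only [if_neg h1, if_neg h2]
      have hc : Commute (a m n ⟨k, hk⟩) (t m n j) := by
        rcases Nat.lt_or_ge j k with h | h
        · exact a_comm_t_low hk (by omega)
        · exact a_comm_t_high hk1 hj (by omega)
      have hAA : a m n ⟨k, hk⟩ * a m n ⟨k, hk⟩ = 1 := rel_sq _ (by exact hk1)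
      calc a m n ⟨k, hk⟩ * t m n j * a m n ⟨k, hk⟩
          = t m n j * (a m n ⟨k, hk⟩ * a m n ⟨k, hk⟩) := by rw [← mul_assoc, hc.eq]
        _ = t m n j := by rw [hAA, mul_one]

/-- The `t j` pairwise commute. -/
lemma t_comm_t {i j : ℕ} (hi : i < n) (hj : j < n) (hij : i < j) :
    Commute (t m n i) (t m n j) := by
  induction i generalizing j with
  | zero =>
      induction j with
      | zero => omega
      | succ j ihj =>
          rcases Nat.lt_or_ge 1 (j+1) with h | h
          · -- j + 1 ≥ 2
            rw [t_succ hj]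
            have h1 : Commute (t m n 0) (a m n ⟨j+1, hj⟩) :=
              (a_comm_t_low hj (by omega)).symm
            exact (h1.mul_right (ihj (by omega) (by omega))).mul_right h1
          · -- j + 1 = 1
            have : j = 0 := by omega
            subst this
            rw [t_succ hj, t_zero (show 0 < n by omega)]
            refine (commute_iff_eq _ _).2 ?_
            have h01 := rel_zero_one (m := m) (show 1 < n by omega)
            calc a m n ⟨0, by omega⟩ *
                  (a m n ⟨1, hj⟩ * a m n ⟨0, by omega⟩ * a m n ⟨1, hj⟩)
                = a m n ⟨0, by omega⟩ * a m n ⟨1, hj⟩ * a m n ⟨0, by omega⟩ *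
                  a m n ⟨1, hj⟩ := by group
              _ = a m n ⟨1, hj⟩ * a m n ⟨0, by omega⟩ * a m n ⟨1, hj⟩ *
                  a m n ⟨0, by omega⟩ := h01
              _ = (a m n ⟨1, hj⟩ * a m n ⟨0, by omega⟩ * a m n ⟨1, hj⟩) *
                  a m n ⟨0, by omega⟩ := by group
  | succ i ihi =>
      rw [t_succ hi]
      have h1 : Commute (a m n ⟨i+1, hi⟩) (t m n j) :=
        a_comm_t_high (by omega) hj (by omega)
      exact (h1.mul_left (ihi (by omega) hj (by omega))).mul_left h1


lemma t_pow_m {j : ℕ} (hj : j < n) : t m n j ^ m = 1 := by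
  induction j with
  | zero => rw [t_zero (by omega)]; exact rel_pow (by omega)
  | succ j ih =>
      rw [t_succ hj]
      have hinv : (a m n ⟨j+1, hj⟩)⁻¹ = a m n ⟨j+1, hj⟩ := a_inv _ (by simp)
      have : a m n ⟨j+1, hj⟩ * t m n j * a m n ⟨j+1, hj⟩ =
          (MulAut.conj (a m n ⟨j+1, hj⟩)) (t m n j) := by
        rw [MulAut.conj_apply, hinv]
      rw [this, ← map_pow, ih (by omega), map_one]

variable (m n)

/-- The homomorphism `ℤ/mℤ →* P` sending `1` to `t j`. -/
noncomputable def zeta (j : Fin n) : Multiplicative (ZMod m) →* P m n :=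
  AddMonoidHom.toMultiplicativeLeft
    (ZMod.lift m ⟨zmultiplesHom (Additive (P m n)) (Additive.ofMul (t m n (j : ℕ))), by
      rw [zmultiplesHom_apply, ← ofMul_zpow, zpow_natCast, t_pow_m j.isLt, ofMul_one]⟩)

variable {m n}

lemma zeta_intCast (j : Fin n) (k : ℤ) :
    zeta m n j (Multiplicative.ofAdd ((k : ZMod m))) = t m n (j : ℕ) ^ k := by
  show (AddMonoidHom.toMultiplicativeLeft _) _ = _
  rw [AddMonoidHom.coe_toMultiplicativeLeft]
  show Additive.toMul ((ZMod.lift m _) ((k : ZMod m))) = _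
  rw [ZMod.lift_coe, zmultiplesHom_apply, toMul_zsmul, toMul_ofMul]

lemma exists_intCast (y : Multiplicative (ZMod m)) :
    ∃ k : ℤ, y = Multiplicative.ofAdd ((k : ZMod m)) := by
  obtain ⟨k, hk⟩ := ZMod.intCast_surjective (n := m) (Multiplicative.toAdd y)
  exact ⟨k, by rw [hk]; rfl⟩

lemma zeta_commute {i j : Fin n} (h : i ≠ j) (x y : Multiplicative (ZMod m)) :
    Commute (zeta m n i x) (zeta m n j y) := by
  obtain ⟨k, rfl⟩ := exists_intCast x
  obtain ⟨l, rfl⟩ := exists_intCast y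
  rw [zeta_intCast, zeta_intCast]
  rcases Nat.lt_or_ge (i : ℕ) (j : ℕ) with hij | hij
  · exact (t_comm_t i.isLt j.isLt hij).zpow_zpow k l
  · have : (j : ℕ) < (i : ℕ) := by
      rcases Nat.eq_or_lt_of_le hij with h' | h'
      · exact absurd (Fin.ext h'.symm) h
      · exact h'
    exact ((t_comm_t j.isLt i.isLt this).symm).zpow_zpow k l

variable (m n)

/-- The homomorphism `(ℤ/mℤ)^n →* P`. -/
noncomputable def TT : (Fin n → Multiplicative (ZMod m)) →* P m n :=
  MonoidHom.noncommPiCoprod (zeta m n) (fun _ _ h x y => zeta_commute h x y)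

variable {m n}

lemma TT_single (i : Fin n) (y : Multiplicative (ZMod m)) :
    TT m n (Pi.mulSingle i y) = zeta m n i y :=
  MonoidHom.noncommPiCoprod_mulSingle _ _ _

/-- `fpred k` is `k - 1` in `Fin n`. -/
def fpred (k : Fin n) : Fin n := ⟨(k : ℕ) - 1, lt_of_le_of_lt (Nat.sub_le _ _) k.isLt⟩

/-- The adjacent transposition `(k-1, k)`. -/
def tau (k : Fin n) : Equiv.Perm (Fin n) := Equiv.swap (fpred k) k

lemma fpred_lt {k : Fin n} (hk : 1 ≤ (k : ℕ)) : (fpred k : ℕ) < (k : ℕ) := by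
  simp only [fpred]; omega

lemma tau_apply_self (k : Fin n) : tau k k = fpred k := Equiv.swap_apply_right _ _

lemma tau_apply_fpred (k : Fin n) : tau k (fpred k) = k := Equiv.swap_apply_left _ _

lemma tau_apply_of_ne {k j : Fin n} (h1 : j ≠ fpred k) (h2 : j ≠ k) : tau k j = j :=
  Equiv.swap_apply_of_ne_of_ne h1 h2

lemma tau_inv (k : Fin n) : (tau k)⁻¹ = tau k := by
  simp [tau, Equiv.swap_inv]

lemma tau_val (k : Fin n) (hk : 1 ≤ (k : ℕ)) (j : Fin n) :
    ((tau k j : Fin n) : ℕ) =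
      if (j : ℕ) = (k : ℕ) then (k : ℕ) - 1
      else if (j : ℕ) = (k : ℕ) - 1 then (k : ℕ) else (j : ℕ) := by
  rcases eq_or_ne j k with rfl | h1
  · rw [tau_apply_self, if_pos rfl]; rfl
  · rcases eq_or_ne j (fpred k) with rfl | h2
    · rw [tau_apply_fpred]
      have hne : ((fpred k : Fin n) : ℕ) ≠ (k : ℕ) := by simp only [fpred]; omega
      rw [if_neg hne, if_pos (show ((fpred k : Fin n) : ℕ) = (k : ℕ) - 1 from rfl)]
    · rw [tau_apply_of_ne h2 h1, if_neg, if_neg]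
      · exact fun h => h2 (Fin.ext h)
      · exact fun h => h1 (Fin.ext h)

lemma a_conj_t' (k : Fin n) (hk : 1 ≤ (k : ℕ)) (j : Fin n) :
    a m n k * t m n (j : ℕ) * a m n k = t m n ((tau k j : Fin n) : ℕ) := by
  have h := a_conj_t (m := m) hk k.isLt (j := (j : ℕ)) j.isLt
  rw [Fin.eta] at h
  rw [h, tau_val k hk j]

lemma a_conj_zeta (k : Fin n) (hk : 1 ≤ (k : ℕ)) (j : Fin n) (y : Multiplicative (ZMod m)) :
    a m n k * zeta m n j y * a m n k = zeta m n (tau k j) y := by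
  obtain ⟨z, rfl⟩ := exists_intCast y
  rw [zeta_intCast, zeta_intCast]
  have hinv : (a m n k)⁻¹ = a m n k := a_inv _ hk
  have : a m n k * t m n (j : ℕ) ^ z * a m n k =
      (MulAut.conj (a m n k)) (t m n (j : ℕ)) ^ z := by
    rw [← map_zpow, MulAut.conj_apply, hinv]
  rw [this, MulAut.conj_apply, hinv, a_conj_t' k hk j]


lemma permAct_apply (σ : Equiv.Perm (Fin n)) (x : Fin n → Multiplicative (ZMod m)) (j : Fin n) :
    permAct m n σ x j = x (σ.symm j) := rfl

lemma permAct_single (σ : Equiv.Perm (Fin n)) (i : Fin n) (y : Multiplicative (ZMod m)) :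
    permAct m n σ (Pi.mulSingle i y) = Pi.mulSingle (σ i) y := by
  funext x
  rw [permAct_apply, Pi.mulSingle_apply, Pi.mulSingle_apply]
  simp [Equiv.symm_apply_eq]

lemma a_conj_TT (k : Fin n) (hk : 1 ≤ (k : ℕ)) (x : Fin n → Multiplicative (ZMod m)) :
    a m n k * TT m n x * a m n k = TT m n (permAct m n (tau k) x) := by
  have hinv : (a m n k)⁻¹ = a m n k := a_inv _ hk
  have key : (MulAut.conj (a m n k)).toMonoidHom.comp (TT m n) =
      (TT m n).comp (permAct m n (tau k)).toMonoidHom := by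
    apply MonoidHom.pi_ext
    intro i y
    simp only [MonoidHom.comp_apply, MulEquiv.coe_toMonoidHom]
    rw [TT_single, MulAut.conj_apply, hinv, a_conj_zeta k hk i y]
    rw [permAct_single, TT_single]
  have := DFunLike.congr_fun key x
  simp only [MonoidHom.comp_apply, MulEquiv.coe_toMonoidHom, MulAut.conj_apply, hinv] at this
  exact this


/-- Number of inversions of a permutation. -/
def len (σ : Equiv.Perm (Fin n)) : ℕ :=
  (Finset.univ.filter fun p : Fin n × Fin n => p.1 < p.2 ∧ σ p.2 < σ p.1).card

/-- `k` is a (left) descent of `σ`. -/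
def IsDesc (σ : Equiv.Perm (Fin n)) (k : Fin n) : Prop :=
  1 ≤ (k : ℕ) ∧ σ⁻¹ k < σ⁻¹ (fpred k)

lemma inv_tau_mul (k : Fin n) (σ : Equiv.Perm (Fin n)) (j : Fin n) :
    (tau k * σ)⁻¹ j = σ⁻¹ (tau k j) := by
  rw [mul_inv_rev, tau_inv]; rfl

lemma strictMono_le' {f : Fin n → Fin n} (hf : StrictMono f) :
    ∀ v (hv : v < n), v ≤ (f ⟨v, hv⟩ : ℕ) := by
  intro v
  induction v with
  | zero => intro hv; exact Nat.zero_le _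
  | succ w ih =>
      intro hv
      have h1 := ih (by omega)
      have h2 : (f ⟨w, by omega⟩ : ℕ) < (f ⟨w+1, hv⟩ : ℕ) :=
        hf (show (⟨w, by omega⟩ : Fin n) < ⟨w+1, hv⟩ by simp [Fin.lt_def])
      omega

lemma strictMono_le {f : Fin n → Fin n} (hf : StrictMono f) (k : Fin n) :
    (k : ℕ) ≤ (f k : ℕ) :=
  strictMono_le' hf k.1 k.2

lemma perm_eq_one_of_no_descent (σ : Equiv.Perm (Fin n))
    (h : ∀ k : Fin n, 1 ≤ (k : ℕ) → σ (fpred k) < σ k) : σ = 1 := by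
  have key : ∀ d : ℕ, ∀ x y : Fin n, (y : ℕ) = (x : ℕ) + d + 1 → σ x < σ y := by
    intro d
    induction d with
    | zero =>
        intro x y hy
        have hx : x = fpred y := Fin.ext (by simp only [fpred]; omega)
        subst hx
        exact h y (by omega)
    | succ d ih =>
        intro x y hy
        have hyn : (y : ℕ) - 1 < n := by have := y.isLt; omega
        calc σ x < σ ⟨(y : ℕ) - 1, hyn⟩ := ih x _ (by simp; omega)
          _ < σ y := by
              have := h y (by omega)
              have he : fpred y = ⟨(y : ℕ) - 1, hyn⟩ := Fin.ext rfl
              rwa [he] at this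
  have hsm : StrictMono σ := by
    intro x y hxy
    have hxy' : (x : ℕ) < (y : ℕ) := hxy
    exact key ((y : ℕ) - (x : ℕ) - 1) x y (by omega)
  have hsm' : StrictMono (σ⁻¹ : Equiv.Perm (Fin n)) := by
    intro x y hxy
    rcases lt_trichotomy (σ⁻¹ x) (σ⁻¹ y) with h' | h' | h'
    · exact h'
    · exact absurd (Equiv.injective _ h') (ne_of_lt (by
        have : x = y := by
          have h1 : σ (σ⁻¹ x) = σ (σ⁻¹ y) := congrArg σ h'
          simpa using h1
        exact absurd this (ne_of_lt hxy)))
    · exfalso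
      have h2 := hsm h'
      simp only [Equiv.Perm.coe_inv, Equiv.apply_symm_apply] at h2
      exact absurd hxy (not_lt.2 h2.le)
  ext k
  have h1 : (k : ℕ) ≤ (σ k : ℕ) := strictMono_le hsm k
  have h2 : (k : ℕ) ≤ ((σ⁻¹ : Equiv.Perm (Fin n)) k : ℕ) := strictMono_le hsm' k
  have h3 : σ k ≤ σ ((σ⁻¹ : Equiv.Perm (Fin n)) k) :=
    hsm.monotone (show k ≤ σ⁻¹ k by rw [Fin.le_def]; exact h2)
  simp only [Equiv.Perm.coe_inv, Equiv.apply_symm_apply] at h3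
  have h4 : σ k = k := le_antisymm h3 (by rw [Fin.le_def]; exact h1)
  simpa using congrArg Fin.val h4

lemma desc_exists {σ : Equiv.Perm (Fin n)} (h : σ ≠ 1) : ∃ k, IsDesc σ k := by
  by_contra hc
  push_neg at hc
  apply h
  have : ∀ k : Fin n, 1 ≤ (k : ℕ) → σ⁻¹ (fpred k) < σ⁻¹ k := by
    intro k hk
    have h1 := hc k
    simp only [IsDesc, not_and, not_lt] at h1
    have h2 := h1 hk
    rcases eq_or_lt_of_le h2 with h3 | h3
    · exfalso
      have := σ⁻¹.injective h3
      have hv : ((fpred k : Fin n) : ℕ) = (k : ℕ) := congrArg Fin.val this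
      simp only [fpred] at hv
      omega
    · exact h3
  have := perm_eq_one_of_no_descent σ⁻¹ this
  calc σ = (σ⁻¹)⁻¹ := by simp
    _ = 1 := by rw [this]; simp

lemma tau_lt {k : Fin n} (hk : 1 ≤ (k : ℕ)) {u v : Fin n} (huv : u < v)
    (hne : ¬((u : ℕ) = (k : ℕ) - 1 ∧ (v : ℕ) = (k : ℕ))) : tau k u < tau k v := by
  have h1 := tau_val k hk u
  have h2 := tau_val k hk v
  simp only [Fin.lt_def] at huv ⊢
  rw [h1, h2]
  have hu := u.isLt
  have hvn := v.isLt
  have hkn := k.isLt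
  split_ifs <;> omega

lemma len_lt {σ : Equiv.Perm (Fin n)} {k : Fin n} (hd : IsDesc σ k) :
    len (tau k * σ) < len σ := by
  obtain ⟨hk, hdesc⟩ := hd
  apply Finset.card_lt_card
  constructor
  · intro p hp
    simp only [Finset.mem_filter, Finset.mem_univ, true_and] at hp ⊢
    refine ⟨hp.1, ?_⟩
    obtain ⟨hp1, hp2⟩ := hp
    simp only [Equiv.Perm.mul_apply] at hp2
    by_contra hcon
    push_neg at hcon
    rcases eq_or_lt_of_le hcon with he | hlt
    · have heq : p.1 = p.2 := σ.injective he
      exact absurd hp1 (by simp [heq])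
    · -- σ p.1 < σ p.2 but τ(σ p.2) < τ(σ p.1) : must be the special pair
      by_cases hsp : (σ p.1 : ℕ) = (k : ℕ) - 1 ∧ (σ p.2 : ℕ) = (k : ℕ)
      · -- then p.1 = σ⁻¹ (fpred k), p.2 = σ⁻¹ k, contradicting descent
        have e1 : σ p.1 = fpred k := Fin.ext (by simp only [fpred]; exact hsp.1)
        have e2 : σ p.2 = k := Fin.ext hsp.2
        have f1 : p.1 = σ⁻¹ (fpred k) := by rw [← e1]; simp
        have f2 : p.2 = σ⁻¹ k := by rw [← e2]; simp
        rw [f1, f2] at hp1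
        exact absurd hp1 (not_lt.2 hdesc.le)
      · exact absurd (tau_lt hk hlt hsp) (not_lt.2 hp2.le)
  · intro hsub
    have hmem : (σ⁻¹ k, σ⁻¹ (fpred k)) ∈
        Finset.univ.filter fun p : Fin n × Fin n => p.1 < p.2 ∧ σ p.2 < σ p.1 := by
      simp only [Finset.mem_filter, Finset.mem_univ, true_and]
      refine ⟨hdesc, ?_⟩
      simp only [Equiv.Perm.coe_inv, Equiv.apply_symm_apply]
      simp only [Fin.lt_def, fpred]
      omega
    have := (hsub hmem : (σ⁻¹ k, σ⁻¹ (fpred k)) ∈ Finset.univ.filter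
      fun p : Fin n × Fin n => p.1 < p.2 ∧ (tau k * σ) p.2 < (tau k * σ) p.1)
    rw [Finset.mem_filter] at this
    simp only [Finset.mem_filter, Finset.mem_univ, true_and, Equiv.Perm.mul_apply,
      Equiv.Perm.coe_inv, Equiv.apply_symm_apply] at this
    obtain ⟨-, hbad⟩ := this
    rw [tau_apply_fpred, tau_apply_self] at hbad
    simp only [Fin.lt_def, fpred] at hbad
    omega


lemma tau_commP {p q : Fin n} (hp : 1 ≤ (p : ℕ)) (hq : 1 ≤ (q : ℕ))
    (h : (p : ℕ) + 1 < (q : ℕ)) : tau p * tau q = tau q * tau p := by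
  have hfp := fpred_lt hp
  have e1 : tau q (fpred p) = fpred p := tau_apply_of_ne
    (by simp only [Ne, Fin.ext_iff, fpred]; omega) (by simp only [Ne, Fin.ext_iff, fpred]; omega)
  have e2 : tau q p = p := tau_apply_of_ne
    (by simp only [Ne, Fin.ext_iff, fpred]; omega) (by simp only [Ne, Fin.ext_iff]; omega)
  have key : Equiv.swap (fpred p) p = tau q * tau p * (tau q)⁻¹ := by
    have h0 := Equiv.swap_apply_apply (tau q) (fpred p) p
    rw [e1, e2] at h0
    exact h0
  have key' : tau p = tau q * tau p * (tau q)⁻¹ := key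
  calc tau p * tau q = (tau q * tau p * (tau q)⁻¹) * tau q := by rw [← key']
    _ = tau q * tau p := by group

lemma tau_braidP {p q : Fin n} (hp : 1 ≤ (p : ℕ)) (hq : (q : ℕ) = (p : ℕ) + 1) :
    tau p * tau q * tau p = tau q * tau p * tau q := by
  have hfq : fpred q = p := Fin.ext (by simp only [fpred]; omega)
  have hfp := fpred_lt hp
  have e1 : tau p (fpred q) = fpred p := by rw [hfq]; exact tau_apply_self p
  have e2 : tau p q = q := tau_apply_of_ne
    (by simp only [Ne, Fin.ext_iff, fpred]; omega) (by simp only [Ne, Fin.ext_iff]; omega)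
  have e3 : tau q (fpred p) = fpred p := tau_apply_of_ne
    (by simp only [Ne, Fin.ext_iff, fpred]; omega) (by simp only [Ne, Fin.ext_iff, fpred]; omega)
  have e4 : tau q p = q := by rw [← hfq]; exact tau_apply_fpred q
  have k1 : Equiv.swap (fpred p) q = tau p * tau q * (tau p)⁻¹ := by
    have h0 := Equiv.swap_apply_apply (tau p) (fpred q) q
    rw [e1, e2] at h0
    exact h0
  have k2 : Equiv.swap (fpred p) q = tau q * tau p * (tau q)⁻¹ := by
    have h0 := Equiv.swap_apply_apply (tau q) (fpred p) p
    rw [e3, e4] at h0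
    exact h0
  have h12 : tau p * tau q * (tau p)⁻¹ = tau q * tau p * (tau q)⁻¹ := by rw [← k1, ← k2]
  rw [tau_inv, tau_inv] at h12
  exact h12

lemma isDesc_ne_one {σ : Equiv.Perm (Fin n)} {k : Fin n} (hd : IsDesc σ k) : σ ≠ 1 := by
  rintro rfl
  obtain ⟨hk, hlt⟩ := hd
  simp only [inv_one, Equiv.Perm.one_apply, Fin.lt_def, fpred] at hlt
  omega

variable (m n)

/-- Canonical form: `R σ` is a canonical word representing the permutation `σ`. -/
noncomputable def R (σ : Equiv.Perm (Fin n)) : P m n :=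
  if h : σ = 1 then 1
  else
    a m n (desc_exists h).choose * R (tau (desc_exists h).choose * σ)
termination_by len σ
decreasing_by exact len_lt (desc_exists h).choose_spec

variable {m n}

lemma R_one : R m n 1 = 1 := by rw [R]; simp


lemma isDesc_tau_disjoint {σ : Equiv.Perm (Fin n)} {p q : Fin n} (hd : IsDesc σ p)
    (hq : 1 ≤ (q : ℕ)) (hdis : (p : ℕ) + 1 < (q : ℕ) ∨ (q : ℕ) + 1 < (p : ℕ)) :
    IsDesc (tau q * σ) p := by
  obtain ⟨hp, hlt⟩ := hd
  refine ⟨hp, ?_⟩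
  rw [inv_tau_mul, inv_tau_mul]
  have e1 : tau q p = p := tau_apply_of_ne
    (by simp only [Ne, Fin.ext_iff, fpred]; omega) (by simp only [Ne, Fin.ext_iff]; omega)
  have e2 : tau q (fpred p) = fpred p := tau_apply_of_ne
    (by simp only [Ne, Fin.ext_iff, fpred]; omega) (by simp only [Ne, Fin.ext_iff, fpred]; omega)
  rw [e1, e2]
  exact hlt

section adjacent

variable {σ : Equiv.Perm (Fin n)} {p q : Fin n}

lemma adj_desc (hdp : IsDesc σ p) (hdq : IsDesc σ q) (hadj : (q : ℕ) = (p : ℕ) + 1) :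
    IsDesc (tau q * σ) p ∧ IsDesc (tau p * (tau q * σ)) q ∧
    IsDesc (tau p * σ) q ∧ IsDesc (tau q * (tau p * σ)) p := by
  have hp1 : 1 ≤ (p : ℕ) := hdp.1
  have hq1 : 1 ≤ (q : ℕ) := hdq.1
  have hfq : fpred q = p := Fin.ext (by simp only [fpred]; omega)
  have c1 : σ⁻¹ p < σ⁻¹ (fpred p) := hdp.2
  have c2 : σ⁻¹ q < σ⁻¹ p := by have := hdq.2; rwa [hfq] at this
  have eqp : tau q p = q := by rw [← hfq]; exact tau_apply_fpred q
  have eqfp : tau q (fpred p) = fpred p := tau_apply_of_ne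
    (by simp only [Ne, Fin.ext_iff, fpred]; omega) (by simp only [Ne, Fin.ext_iff, fpred]; omega)
  have epq : tau p q = q := tau_apply_of_ne
    (by simp only [Ne, Fin.ext_iff, fpred]; omega) (by simp only [Ne, Fin.ext_iff]; omega)
  have epp : tau p p = fpred p := tau_apply_self p
  have epfp : tau p (fpred p) = p := tau_apply_fpred p
  have eqq : tau q q = p := by rw [tau_apply_self, hfq]
  refine ⟨⟨hp1, ?_⟩, ⟨hq1, ?_⟩, ⟨hq1, ?_⟩, ⟨hp1, ?_⟩⟩
  · rw [inv_tau_mul, inv_tau_mul, eqp, eqfp]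
    exact c2.trans c1
  · rw [inv_tau_mul, inv_tau_mul, inv_tau_mul, inv_tau_mul, hfq, epq, eqq, epp, eqfp]
    exact c1
  · rw [inv_tau_mul, inv_tau_mul, hfq, epq, epp]
    exact c2.trans c1
  · rw [inv_tau_mul, inv_tau_mul, inv_tau_mul, inv_tau_mul, eqp, epq, eqfp, epfp]
    exact c2

end adjacent

lemma R_desc_aux : ∀ L : ℕ, ∀ σ : Equiv.Perm (Fin n), len σ ≤ L → ∀ k, IsDesc σ k →
    a m n k * R m n σ = R m n (tau k * σ) := by
  intro L
  induction L with
  | zero =>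
      intro σ hσ k hd
      exact absurd (lt_of_lt_of_le (len_lt hd) hσ) (by omega)
  | succ L IH =>
      intro σ hσ k hd
      have hne : σ ≠ 1 := isDesc_ne_one hd
      set k₀ := (desc_exists hne).choose with hk₀
      have hd₀ : IsDesc σ k₀ := (desc_exists hne).choose_spec
      have hRσ : R m n σ = a m n k₀ * R m n (tau k₀ * σ) := by
        conv_lhs => rw [R]
        rw [dif_neg hne]
      have pair : ∀ p q : Fin n, IsDesc σ p → IsDesc σ q →
          ((q : ℕ) = (p : ℕ) + 1 ∨ (p : ℕ) + 1 < (q : ℕ)) →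
          R m n (tau q * σ) = a m n q * (a m n p * R m n (tau p * σ)) ∧
          R m n (tau p * σ) = a m n p * (a m n q * R m n (tau q * σ)) := by
        intro p q hdp hdq hcase
        have hp1 : 1 ≤ (p : ℕ) := hdp.1
        have hq1 : 1 ≤ (q : ℕ) := hdq.1
        have hLq : len (tau q * σ) ≤ L := by have := len_lt hdq; omega
        have hLp : len (tau p * σ) ≤ L := by have := len_lt hdp; omega
        set A := a m n p with hA
        set B := a m n q with hB
        set X := R m n (tau q * σ) with hX
        set Y := R m n (tau p * σ) with hY
        have hAA : A * A = 1 := rel_sq p hp1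
        have hBB : B * B = 1 := rel_sq q hq1
        rcases hcase with hadj | hgap
        · obtain ⟨d1, d2, d3, d4⟩ := adj_desc hdp hdq hadj
          have A1 := IH (tau q * σ) hLq p d1
          have A2 := IH (tau p * (tau q * σ)) (by have h1 := len_lt d1; omega) q d2
          have A3 := IH (tau p * σ) hLp q d3
          have A4 := IH (tau q * (tau p * σ)) (by have h1 := len_lt d3; omega) p d4
          have hbr := tau_braidP hp1 hadj
          have hperm : tau q * (tau p * (tau q * σ)) = tau p * (tau q * (tau p * σ)) := by
            simp only [← mul_assoc]
            rw [← hbr]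
          rw [← A1] at A2
          rw [← A3] at A4
          rw [hperm] at A2
          have star : B * (A * X) = A * (B * Y) := A2.trans A4.symm
          have hbrP : A * B * A = B * A * B := rel_braid hp1 hadj
          constructor
          · calc X = A * (A * X) := by rw [← mul_assoc, hAA, one_mul]
              _ = A * (B * (B * (A * X))) := by rw [← mul_assoc B B, hBB, one_mul]
              _ = A * (B * (A * (B * Y))) := by rw [star]
              _ = (A * B * A) * B * Y := by group
              _ = (B * A * B) * B * Y := by rw [hbrP]
              _ = B * A * (B * B) * Y := by group
              _ = B * (A * Y) := by rw [hBB]; group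
          · calc Y = B * (B * Y) := by rw [← mul_assoc, hBB, one_mul]
              _ = B * (A * (A * (B * Y))) := by rw [← mul_assoc A A, hAA, one_mul]
              _ = B * (A * (B * (A * X))) := by rw [← star]
              _ = (B * A * B) * A * X := by group
              _ = (A * B * A) * A * X := by rw [hbrP]
              _ = A * B * (A * A) * X := by group
              _ = A * (B * X) := by rw [hAA]; group
        · have d1 : IsDesc (tau q * σ) p := isDesc_tau_disjoint hdp hq1 (Or.inl hgap)
          have d3 : IsDesc (tau p * σ) q := isDesc_tau_disjoint hdq hp1 (Or.inr hgap)
          have A1 := IH (tau q * σ) hLq p d1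
          have A3 := IH (tau p * σ) hLp q d3
          have hperm : tau p * (tau q * σ) = tau q * (tau p * σ) := by
            rw [← mul_assoc, tau_commP hp1 hq1 hgap, mul_assoc]
          rw [hperm] at A1
          have star : A * X = B * Y := A1.trans A3.symm
          have hcomm : A * B = B * A := rel_comm hgap
          constructor
          · calc X = A * (A * X) := by rw [← mul_assoc, hAA, one_mul]
              _ = A * (B * Y) := by rw [star]
              _ = (A * B) * Y := by group
              _ = (B * A) * Y := by rw [hcomm]
              _ = B * (A * Y) := by group
          · calc Y = B * (B * Y) := by rw [← mul_assoc, hBB, one_mul]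
              _ = B * (A * X) := by rw [← star]
              _ = (B * A) * X := by group
              _ = (A * B) * X := by rw [← hcomm]
              _ = A * (B * X) := by group
      by_cases hkk : k = k₀
      · rw [hkk, hRσ, ← mul_assoc, rel_sq k₀ hd₀.1, one_mul]
      · have hvne : (k : ℕ) ≠ (k₀ : ℕ) := fun h => hkk (Fin.ext h)
        rcases Nat.lt_or_ge (k₀ : ℕ) (k : ℕ) with h | h
        · rw [hRσ]
          exact (pair k₀ k hd₀ hd (by omega)).1.symm
        · rw [hRσ]
          exact (pair k k₀ hd hd₀ (by omega)).2.symm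

lemma R_tau (k : Fin n) (hk : 1 ≤ (k : ℕ)) (σ : Equiv.Perm (Fin n)) :
    a m n k * R m n σ = R m n (tau k * σ) := by
  by_cases hd : IsDesc σ k
  · exact R_desc_aux (m := m) (len σ) σ le_rfl k hd
  · have hd' : IsDesc (tau k * σ) k := by
      refine ⟨hk, ?_⟩
      rw [inv_tau_mul, inv_tau_mul, tau_apply_self, tau_apply_fpred]
      have h1 : ¬ σ⁻¹ k < σ⁻¹ (fpred k) := fun h => hd ⟨hk, h⟩
      have h2 : σ⁻¹ (fpred k) ≠ σ⁻¹ k := by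
        intro h
        have h3 : fpred k = k := σ⁻¹.injective h
        have := congrArg Fin.val h3
        simp only [fpred] at this
        omega
      exact lt_of_le_of_ne (not_lt.1 h1) h2
    have key := R_desc_aux (m := m) (len (tau k * σ)) (tau k * σ) le_rfl k hd'
    have hττ : tau k * (tau k * σ) = σ := by
      rw [← mul_assoc, tau, Equiv.swap_mul_self, one_mul]
    rw [hττ] at key
    rw [← key, ← mul_assoc, rel_sq k hk, one_mul]


open SemidirectProduct in
/-- Images of the generators in the wreath product. -/
def F (m n : ℕ) (i : Fin n) :
    SemidirectProduct (Fin n → Multiplicative (ZMod m)) (Equiv.Perm (Fin n)) (permAct m n) :=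
  if (i : ℕ) = 0 then inl (Pi.mulSingle i (Multiplicative.ofAdd (1 : ZMod m)))
  else inr (tau i)

open SemidirectProduct

lemma inr_mul_inl (σ : Equiv.Perm (Fin n)) (v : Fin n → Multiplicative (ZMod m)) :
    (inr σ : SemidirectProduct _ _ (permAct m n)) * inl v =
      inl (permAct m n σ v) * inr σ := by
  rw [inl_aut (φ := permAct m n) σ v, map_inv]
  group

lemma inr_tau_sq (k : Fin n) :
    (inr (tau k) : SemidirectProduct _ _ (permAct m n)) * inr (tau k) = 1 := by
  rw [← map_mul, tau, Equiv.swap_mul_self, map_one]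

lemma F_rels : ∀ r ∈ Wrels m n, FreeGroup.lift (F m n) r = 1 := by
  intro r hr
  rcases hr with ⟨h, rfl⟩ | ⟨i, hi, rfl⟩ | ⟨h, rfl⟩ | ⟨i, j, hij, rfl⟩ | ⟨i, j, hi, hij, rfl⟩
  · -- s_0 ^ m = 1
    rw [map_pow, FreeGroup.lift_apply_of, F, if_pos rfl, ← map_pow, ← Pi.mulSingle_pow,
      ← ofAdd_nsmul]
    have : (m : ℕ) • (1 : ZMod m) = 0 := by
      simp [nsmul_eq_mul, ZMod.natCast_self]
    simp [this]
  · -- s_i ^ 2 = 1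
    rw [map_pow, FreeGroup.lift_apply_of, F, if_neg (by omega), sq, inr_tau_sq]
  · -- s_0 s_1 s_0 s_1 = s_1 s_0 s_1 s_0
    simp only [map_mul, map_inv, FreeGroup.lift_apply_of]
    rw [mul_inv_eq_one]
    have h0 : ((⟨0, by omega⟩ : Fin n) : ℕ) = 0 := rfl
    have h1 : ((⟨1, h⟩ : Fin n) : ℕ) ≠ 0 := by simp
    rw [F, F, if_pos h0, if_neg h1]
    set u : Fin n → Multiplicative (ZMod m) :=
      Pi.mulSingle (⟨0, by omega⟩ : Fin n) (Multiplicative.ofAdd (1 : ZMod m)) with hu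
    set τ := tau (⟨1, h⟩ : Fin n) with hτ
    have happ : τ (⟨0, by omega⟩ : Fin n) = ⟨1, h⟩ := by
      rw [hτ, show (⟨0, by omega⟩ : Fin n) = fpred ⟨1, h⟩ from Fin.ext rfl]
      exact tau_apply_fpred _
    have hact : permAct m n τ u =
        Pi.mulSingle (⟨1, h⟩ : Fin n) (Multiplicative.ofAdd (1 : ZMod m)) := by
      rw [hu, permAct_single, happ]
    set u' : Fin n → Multiplicative (ZMod m) :=
      Pi.mulSingle (⟨1, h⟩ : Fin n) (Multiplicative.ofAdd (1 : ZMod m)) with hu'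
    calc inl u * inr τ * inl u * inr τ
        = inl u * (inr τ * inl u) * inr τ := by group
      _ = inl u * (inl u' * inr τ) * inr τ := by rw [inr_mul_inl, hact]
      _ = inl (u * u') * (inr τ * inr τ) := by rw [map_mul]; group
      _ = inl (u' * u) := by rw [inr_tau_sq, mul_one, mul_comm u u']
      _ = inr τ * inl u * inr τ * inl u := by
          rw [show inr τ * inl u * inr τ * inl u = (inr τ * inl u) * inr τ * inl u from by group,
            inr_mul_inl, hact]
          calc inl (u' * u) = inl u' * inl u := by rw [map_mul]
            _ = inl u' * (inr τ * inr τ) * inl u := by rw [inr_tau_sq]; group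
            _ = inl u' * inr τ * inr τ * inl u := by group
  · -- commuting relations
    simp only [map_mul, map_inv, FreeGroup.lift_apply_of]
    rw [mul_inv_eq_one]
    by_cases hi0 : (i : ℕ) = 0
    · rw [F, F, if_pos hi0, if_neg (by omega)]
      have hfix : tau j i = i := tau_apply_of_ne
        (by simp only [Ne, Fin.ext_iff, fpred]; omega) (by simp only [Ne, Fin.ext_iff]; omega)
      rw [inr_mul_inl, permAct_single, hfix]
    · rw [F, F, if_neg hi0, if_neg (by omega), ← map_mul, ← map_mul,
        tau_commP (by omega) (by omega) hij]
  · -- braid relations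
    simp only [map_mul, map_inv, FreeGroup.lift_apply_of]
    rw [mul_inv_eq_one]
    rw [F, F, if_neg (by omega), if_neg (by omega), ← map_mul, ← map_mul, ← map_mul, ← map_mul,
      tau_braidP hi hij]

variable (m n)

/-- The canonical homomorphism from the presented group to the wreath product. -/
def phi : P m n →* SemidirectProduct (Fin n → Multiplicative (ZMod m)) (Equiv.Perm (Fin n))
    (permAct m n) :=
  PresentedGroup.toGroup (F_rels)

variable {m n}

lemma phi_of (i : Fin n) : phi m n (a m n i) = F m n i :=
  PresentedGroup.toGroup.of _

lemma phi_t {j : ℕ} (hj : j < n) :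
    phi m n (t m n j) = inl (Pi.mulSingle (⟨j, hj⟩ : Fin n) (Multiplicative.ofAdd (1 : ZMod m))) := by
  induction j with
  | zero =>
      rw [t_zero (by omega), phi_of, F, if_pos rfl]
  | succ j ih =>
      rw [t_succ hj, map_mul, map_mul, phi_of, ih (by omega), F, if_neg (by simp)]
      have hfp : fpred (⟨j+1, hj⟩ : Fin n) = ⟨j, by omega⟩ := Fin.ext rfl
      have happ : tau (⟨j+1, hj⟩ : Fin n) ⟨j, by omega⟩ = ⟨j+1, hj⟩ := by
        rw [← hfp]; exact tau_apply_fpred _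
      calc inr (tau ⟨j+1, hj⟩) * inl (Pi.mulSingle (⟨j, by omega⟩ : Fin n)
            (Multiplicative.ofAdd (1 : ZMod m))) * inr (tau ⟨j+1, hj⟩)
          = inl (permAct m n (tau ⟨j+1, hj⟩) (Pi.mulSingle (⟨j, by omega⟩ : Fin n)
              (Multiplicative.ofAdd (1 : ZMod m)))) *
            (inr (tau ⟨j+1, hj⟩) * inr (tau ⟨j+1, hj⟩)) := by rw [inr_mul_inl]; group
        _ = inl (Pi.mulSingle (⟨j+1, hj⟩ : Fin n) (Multiplicative.ofAdd (1 : ZMod m))) := by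
            rw [inr_tau_sq, mul_one, permAct_single, happ]

lemma phi_zeta (j : Fin n) (y : Multiplicative (ZMod m)) :
    phi m n (zeta m n j y) = inl (Pi.mulSingle j y) := by
  obtain ⟨k, rfl⟩ := exists_intCast y
  rw [zeta_intCast, map_zpow, phi_t j.isLt, ← map_zpow, ← Pi.mulSingle_zpow]
  have hsingle : (Pi.mulSingle (⟨(j : ℕ), j.isLt⟩ : Fin n)
        (Multiplicative.ofAdd (1 : ZMod m) ^ k) : Fin n → Multiplicative (ZMod m)) =
      Pi.mulSingle j (Multiplicative.ofAdd ((k : ZMod m))) := by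
    have hj : (⟨(j : ℕ), j.isLt⟩ : Fin n) = j := Fin.ext rfl
    rw [hj, ← ofAdd_zsmul, zsmul_eq_mul, mul_one]
  rw [hsingle]

lemma phi_TT (x : Fin n → Multiplicative (ZMod m)) :
    phi m n (TT m n x) = inl x := by
  have key : (phi m n).comp (TT m n) =
      (inl : _ →* SemidirectProduct _ _ (permAct m n)) := by
    apply MonoidHom.pi_ext
    intro i y
    rw [MonoidHom.comp_apply, TT_single, phi_zeta]
  exact DFunLike.congr_fun key x

lemma phi_R : ∀ L : ℕ, ∀ σ : Equiv.Perm (Fin n), len σ ≤ L →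
    phi m n (R m n σ) = inr σ := by
  intro L
  induction L with
  | zero =>
      intro σ hσ
      by_cases h : σ = 1
      · subst h; rw [R_one, map_one, map_one]
      · exact absurd (lt_of_lt_of_le (len_lt (desc_exists h).choose_spec) hσ) (by omega)
  | succ L IH =>
      intro σ hσ
      by_cases h : σ = 1
      · subst h; rw [R_one, map_one, map_one]
      · set k₀ := (desc_exists h).choose with hk₀
        have hd₀ : IsDesc σ k₀ := (desc_exists h).choose_spec
        have hRσ : R m n σ = a m n k₀ * R m n (tau k₀ * σ) := by
          conv_lhs => rw [R]
          rw [dif_neg h]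
        rw [hRσ, map_mul, phi_of, IH _ (by have := len_lt hd₀; omega), F,
          if_neg (by have := hd₀.1; omega), ← map_mul, ← mul_assoc, tau,
          Equiv.swap_mul_self, one_mul]

variable (m n)

/-- The canonical section of `phi`. -/
noncomputable def rho
    (g : SemidirectProduct (Fin n → Multiplicative (ZMod m)) (Equiv.Perm (Fin n)) (permAct m n)) :
    P m n :=
  TT m n g.left * R m n g.right

variable {m n}

lemma rho_one : rho m n 1 = 1 := by
  rw [rho, one_left, one_right, map_one, R_one, mul_one]

lemma phi_rho (g : SemidirectProduct (Fin n → Multiplicative (ZMod m)) (Equiv.Perm (Fin n))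
    (permAct m n)) : phi m n (rho m n g) = g := by
  rw [rho, map_mul, phi_TT, phi_R (len g.right) g.right le_rfl, inl_left_mul_inr_right]

lemma rho_F_mul (i : Fin n)
    (g : SemidirectProduct (Fin n → Multiplicative (ZMod m)) (Equiv.Perm (Fin n)) (permAct m n)) :
    a m n i * rho m n g = rho m n (F m n i * g) := by
  by_cases hi : (i : ℕ) = 0
  · rw [F, if_pos hi]
    have hl : (inl (Pi.mulSingle i (Multiplicative.ofAdd (1 : ZMod m))) * g).left =
        Pi.mulSingle i (Multiplicative.ofAdd (1 : ZMod m)) * g.left := by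
      simp [mul_left]
    have hr : (inl (Pi.mulSingle i (Multiplicative.ofAdd (1 : ZMod m))) * g).right = g.right := by
      simp [mul_right]
    rw [rho, rho, hl, hr, map_mul, TT_single, ← mul_assoc]
    congr 2
    have h1 : zeta m n i (Multiplicative.ofAdd (((1 : ℤ) : ZMod m))) = t m n (i : ℕ) ^ (1 : ℤ) :=
      zeta_intCast i 1
    rw [show (Multiplicative.ofAdd ((1 : ZMod m))) =
      (Multiplicative.ofAdd (((1 : ℤ) : ZMod m))) by norm_num, h1, zpow_one]
    have : (i : ℕ) = 0 := hi
    rw [show i = (⟨0, by omega⟩ : Fin n) from Fin.ext hi]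
    exact (t_zero (by omega)).symm
  · rw [F, if_neg hi]
    have hl : (inr (tau i) * g).left = permAct m n (tau i) g.left := by simp [mul_left]
    have hr : (inr (tau i) * g).right = tau i * g.right := by simp [mul_right]
    rw [rho, rho, hl, hr, ← a_conj_TT i (by omega) g.left, ← R_tau i (by omega) g.right]
    have hsq : a m n i * a m n i = 1 := rel_sq i (by omega)
    symm
    calc a m n i * TT m n g.left * a m n i * (a m n i * R m n g.right)
        = a m n i * TT m n g.left * (a m n i * a m n i) * R m n g.right := by group
      _ = a m n i * (TT m n g.left * R m n g.right) := by rw [hsq]; group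

lemma rho_surjective : Function.Surjective (rho m n) := by
  have main : ∀ w : FreeGroup (Fin n), ∀ g,
      (∃ g', rho m n g' = (PresentedGroup.mk (Wrels m n) w) * rho m n g) ∧
      (∃ g', rho m n g' = (PresentedGroup.mk (Wrels m n) w)⁻¹ * rho m n g) := by
    intro w
    induction w using FreeGroup.induction_on with
    | C1 => exact fun g => ⟨⟨g, by simp⟩, ⟨g, by simp⟩⟩
    | of i =>
        intro g
        constructor
        · exact ⟨F m n i * g, (rho_F_mul i g).symm⟩
        · refine ⟨(F m n i)⁻¹ * g, ?_⟩
          have := rho_F_mul i ((F m n i)⁻¹ * g)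
          rw [← mul_assoc, mul_inv_cancel, one_mul] at this
          rw [eq_inv_mul_iff_mul_eq, ← this]
          rfl
    | inv_of i hi =>
        intro g
        rw [map_inv, inv_inv]
        exact ⟨(hi g).2, (hi g).1⟩
    | mul x y hx hy =>
        intro g
        constructor
        · obtain ⟨g1, h1⟩ := (hy g).1
          obtain ⟨g2, h2⟩ := (hx g1).1
          exact ⟨g2, by rw [h2, h1, map_mul]; group⟩
        · obtain ⟨g1, h1⟩ := (hx g).2
          obtain ⟨g2, h2⟩ := (hy g1).2
          exact ⟨g2, by rw [h2, h1, map_mul]; group⟩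
  intro p
  obtain ⟨w, rfl⟩ := PresentedGroup.mk_surjective (Wrels m n) p
  obtain ⟨g', hg'⟩ := (main w 1).1
  exact ⟨g', by rw [hg', rho_one, mul_one]⟩

end

/-- the group presented by the above generators and relations (the
complex reflection group `W_{m,n}` of type `G(m,1,n)`) is isomorphic to the wreath
product `(ℤ/mℤ)^n ⋊ S_n`, where `S_n` permutes the `n` copies of `ℤ/mℤ`. -/
theorem stmt14 (m n : ℕ) :
    Nonempty (PresentedGroup (Wrels m n) ≃*
      SemidirectProduct (Fin n → Multiplicative (ZMod m)) (Equiv.Perm (Fin n))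
        (permAct m n)) := by
  refine ⟨MulEquiv.ofBijective (phi m n) ⟨?_, ?_⟩⟩
  · intro x y hxy
    obtain ⟨gx, rfl⟩ := rho_surjective x
    obtain ⟨gy, rfl⟩ := rho_surjective y
    rw [phi_rho, phi_rho] at hxy
    rw [hxy]
  · intro g
    exact ⟨rho m n g, phi_rho g⟩

end SSW
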